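/- Let g be a symmetric n×n real matrix and φ ∈ ℝ with every eigenvalue of φg less than 1. Suppose the largest eigenvalue λ₁(φg) of φg is simple, with unit eigenvector u satisfying u_i ≠ 0 for all i. Let C > 0 and let a* maximize aᵀ (I − φg)⁻² a over {a ∈ ℝⁿ : ‖a‖² ≤ C}. Define equilibrium actions x* = (I − φg)⁻¹ a* and payoffs π_i = ½ (x*_i)². Then all π_i are strictly positive and the Theil index of the payoff vector satisfies T = (1/n) Σ_{i=1}^n (π_i/π̄) ln(π_i/π̄) = Σ_{i=1}^n u_i² ln(n u_i²), where π̄ = (1/n) Σ_{i=1}^n π_i. -/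

import Mathlib

open Matrix

/-- `μ` is a (real) eigenvalue of the matrix `M`. -/
def hasEigen {n : ℕ} (M : Matrix (Fin n) (Fin n) ℝ) (μ : ℝ) : Prop :=
  ∃ v : Fin n → ℝ, v ≠ 0 ∧ M.mulVec v = μ • v

private lemma dot_expand {n : ℕ} (v : Fin n → Fin n → ℝ)
    (hv : ∀ j k, (∑ i, v j i * v k i) = if j = k then (1:ℝ) else 0)
    (c d : Fin n → ℝ) :
    (∑ i, (∑ k, c k * v k i) * (∑ k, d k * v k i)) = ∑ k, c k * d k := by
  have step : ∀ i, (∑ k, c k * v k i) * (∑ l, d l * v l i)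
      = ∑ k, ∑ l, c k * d l * (v k i * v l i) := by
    intro i
    rw [Fintype.sum_mul_sum]
    exact Finset.sum_congr rfl fun k _ => Finset.sum_congr rfl fun l _ => by ring
  calc (∑ i, (∑ k, c k * v k i) * (∑ k, d k * v k i))
      = ∑ i, ∑ k, ∑ l, c k * d l * (v k i * v l i) := Finset.sum_congr rfl fun i _ => step i
    _ = ∑ k, ∑ i, ∑ l, c k * d l * (v k i * v l i) := Finset.sum_comm
    _ = ∑ k, ∑ l, ∑ i, c k * d l * (v k i * v l i) :=
        Finset.sum_congr rfl fun k _ => Finset.sum_comm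
    _ = ∑ k, ∑ l, c k * d l * (∑ i, v k i * v l i) := by
        simp_rw [Finset.mul_sum]
    _ = ∑ k, ∑ l, c k * d l * (if k = l then 1 else 0) := by
        simp_rw [hv]
    _ = ∑ k, c k * d k := by
        simp [mul_ite, mul_one, mul_zero]

theorem stmt7 (n : ℕ) (hn : 0 < n) (g : Matrix (Fin n) (Fin n) ℝ) (hg : g.IsSymm)
    (φ : ℝ) (heig : ∀ μ : ℝ, hasEigen (φ • g) μ → μ < 1)
    (lam1 : ℝ) (u : Fin n → ℝ)
    (hu_eig : (φ • g).mulVec u = lam1 • u)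
    (hu_unit : (∑ i, u i ^ 2) = 1)
    (hmax : ∀ μ : ℝ, hasEigen (φ • g) μ → μ ≤ lam1)
    (hsimple : ∀ v : Fin n → ℝ, (φ • g).mulVec v = lam1 • v → ∃ c : ℝ, v = c • u)
    (hu_ne : ∀ i, u i ≠ 0)
    (C : ℝ) (hC : 0 < C)
    (astar : Fin n → ℝ)
    (hfeas : (∑ i, astar i ^ 2) ≤ C)
    (hopt : ∀ a : Fin n → ℝ, (∑ i, a i ^ 2) ≤ C →
      a ⬝ᵥ (((1 - φ • g)⁻¹ ^ 2).mulVec a)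
        ≤ astar ⬝ᵥ (((1 - φ • g)⁻¹ ^ 2).mulVec astar)) :
    let xstar : Fin n → ℝ := (1 - φ • g)⁻¹.mulVec astar
    let pay : Fin n → ℝ := fun i => xstar i ^ 2 / 2
    let paybar : ℝ := (∑ i, pay i) / n
    (∀ i, 0 < pay i) ∧
    (1 / (n : ℝ)) * ∑ i, (pay i / paybar) * Real.log (pay i / paybar)
      = ∑ i, u i ^ 2 * Real.log ((n : ℝ) * u i ^ 2) := by
  intro xstar pay paybar
  set A := φ • g with hA_def
  have hH : A.IsHermitian := by
    have h1 : A.IsSymm := hg.smul φ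
    show Aᴴ = A
    rw [Matrix.conjTranspose_eq_transpose_of_trivial]
    exact h1
  set v : Fin n → Fin n → ℝ := fun k => hH.eigenvectorBasis k with hv_def
  set μ : Fin n → ℝ := hH.eigenvalues with hμ_def
  have hv_ortho : ∀ j k, (∑ i, v j i * v k i) = if j = k then (1:ℝ) else 0 := by
    intro j k
    have h := (orthonormal_iff_ite.mp hH.eigenvectorBasis.orthonormal) j k
    rw [PiLp.inner_apply] at h
    simp [RCLike.inner_apply] at h
    rw [← h]
    exact Finset.sum_congr rfl fun i _ => mul_comm _ _
  have hv_eig : ∀ k, A.mulVec (v k) = μ k • v k := fun k => hH.mulVec_eigenvectorBasis k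
  have hv_ne : ∀ k, v k ≠ 0 := by
    intro k h
    have := hv_ortho k k
    simp [h] at this
  have hμlt : ∀ k, μ k < 1 := fun k => heig _ ⟨v k, hv_ne k, hv_eig k⟩
  have hμle : ∀ k, μ k ≤ lam1 := fun k => hmax _ ⟨v k, hv_ne k, hv_eig k⟩
  have hu_ne0 : u ≠ 0 := by
    intro h
    rw [h] at hu_unit
    simp at hu_unit
  have hlam1 : lam1 < 1 := heig _ ⟨u, hu_ne0, hu_eig⟩
  set s : ℝ := 1 - lam1 with hs_def
  have hs : 0 < s := by simp only [hs_def]; linarith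
  set M : Matrix (Fin n) (Fin n) ℝ := 1 - A with hM_def
  have hMdet : IsUnit M.det := by
    rw [isUnit_iff_ne_zero]
    intro h
    obtain ⟨w, hw0, hw⟩ := (Matrix.exists_mulVec_eq_zero_iff).mpr h
    have hAw : A.mulVec w = (1:ℝ) • w := by
      rw [hM_def, Matrix.sub_mulVec, Matrix.one_mulVec] at hw
      have := sub_eq_zero.mp hw
      rw [one_smul]; exact this.symm
    exact absurd (heig 1 ⟨w, hw0, hAw⟩) (lt_irrefl 1)
  have hMinvM : M⁻¹ * M = 1 := Matrix.nonsing_inv_mul M hMdet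
  have key_inv : ∀ (w : Fin n → ℝ) (t : ℝ), t < 1 → A.mulVec w = t • w →
      M⁻¹.mulVec w = (1 - t)⁻¹ • w := by
    intro w t ht hw
    have hMw : M.mulVec w = (1 - t) • w := by
      rw [hM_def, Matrix.sub_mulVec, Matrix.one_mulVec, hw, sub_smul, one_smul]
    have ht0 : (1:ℝ) - t ≠ 0 := by linarith
    have h2 : M⁻¹.mulVec (M.mulVec w) = M⁻¹.mulVec ((1-t) • w) := by rw [hMw]
    rw [Matrix.mulVec_mulVec, hMinvM, Matrix.one_mulVec, Matrix.mulVec_smul] at h2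
    conv_rhs => rw [h2]
    rw [smul_smul, inv_mul_cancel₀ ht0, one_smul]
  have hMsymm : Mᵀ = M := by
    have hAT : Aᵀ = A := hg.smul φ
    rw [hM_def, Matrix.transpose_sub, Matrix.transpose_one, hAT]
  have hMinv_symm : (M⁻¹)ᵀ = M⁻¹ := by
    rw [Matrix.transpose_nonsing_inv, hMsymm]
  -- quadratic form as sum of squares
  have hQ : ∀ a : Fin n → ℝ, a ⬝ᵥ ((M⁻¹ ^ 2).mulVec a)
      = ∑ i, (M⁻¹.mulVec a) i * (M⁻¹.mulVec a) i := by
    intro a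
    rw [pow_two, ← Matrix.mulVec_mulVec, Matrix.dotProduct_mulVec]
    have : a ᵥ* M⁻¹ = M⁻¹.mulVec a := by
      rw [← hMinv_symm, Matrix.mulVec_transpose, hMinv_symm]
    rw [this]
    rfl
  -- representation in eigenbasis
  set c : (Fin n → ℝ) → Fin n → ℝ := fun a k => ∑ i, v k i * a i with hc_def
  have hrep : ∀ a : Fin n → ℝ, a = ∑ k, c a k • v k := by
    intro a
    have h := hH.eigenvectorBasis.sum_repr ((WithLp.equiv 2 _).symm a)
    funext i
    have h2 : a i = ∑ k, hH.eigenvectorBasis.repr ((WithLp.equiv 2 _).symm a) k • v k i :=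
      (congrArg (fun x : EuclideanSpace ℝ (Fin n) => x i) h).symm.trans
        (by rw [WithLp.ofLp_sum, Finset.sum_apply]; rfl)
    have h3 : ∀ k, hH.eigenvectorBasis.repr ((WithLp.equiv 2 _).symm a) k = c a k := by
      intro k
      rw [hH.eigenvectorBasis.repr_apply_apply, PiLp.inner_apply]
      simp [hc_def, RCLike.inner_apply]
      exact Finset.sum_congr rfl fun i _ => mul_comm _ _
    rw [h2]
    rw [Finset.sum_apply]
    exact Finset.sum_congr rfl fun k _ => by rw [h3]; rfl
  have hrep' : ∀ a : Fin n → ℝ, ∀ i, a i = ∑ k, c a k * v k i := by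
    intro a i
    conv_lhs => rw [hrep a]
    rw [Finset.sum_apply]
    rfl
  -- Parseval
  have hnorm : ∀ a : Fin n → ℝ, (∑ i, a i ^ 2) = ∑ k, c a k ^ 2 := by
    intro a
    have := dot_expand v hv_ortho (c a) (c a)
    simp_rw [← hrep' a, ← pow_two] at this
    exact this
  -- value of quadratic form
  have hMinva : ∀ a : Fin n → ℝ, M⁻¹.mulVec a = ∑ k, (c a k * (1 - μ k)⁻¹) • v k := by
    intro a
    conv_lhs => rw [hrep a]
    rw [show M⁻¹.mulVec (∑ k, c a k • v k) = ∑ k, M⁻¹.mulVec (c a k • v k) from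
      map_sum (Matrix.mulVecLin M⁻¹) _ Finset.univ]
    refine Finset.sum_congr rfl fun k _ => ?_
    rw [Matrix.mulVec_smul, key_inv (v k) (μ k) (hμlt k) (hv_eig k), smul_smul]
  have hQval : ∀ a : Fin n → ℝ, a ⬝ᵥ ((M⁻¹ ^ 2).mulVec a)
      = ∑ k, c a k ^ 2 * ((1 - μ k)⁻¹) ^ 2 := by
    intro a
    rw [hQ]
    have hfun : ∀ i, (M⁻¹.mulVec a) i = ∑ k, (c a k * (1 - μ k)⁻¹) * v k i := by
      intro i
      rw [hMinva a, Finset.sum_apply]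
      rfl
    simp_rw [hfun]
    rw [dot_expand v hv_ortho _ _]
    exact Finset.sum_congr rfl fun k _ => by ring
  -- lower bound from candidate √C • u
  have hMinv_u : M⁻¹.mulVec u = s⁻¹ • u := key_inv u lam1 hlam1 hu_eig
  have hcand_feas : (∑ i, (Real.sqrt C • u) i ^ 2) ≤ C := by
    have : (∑ i, (Real.sqrt C • u) i ^ 2) = C * ∑ i, u i ^ 2 := by
      rw [Finset.mul_sum]
      refine Finset.sum_congr rfl fun i _ => ?_
      rw [Pi.smul_apply, smul_eq_mul, mul_pow, Real.sq_sqrt hC.le]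
    rw [this, hu_unit, mul_one]
  have hcand_val : (Real.sqrt C • u) ⬝ᵥ ((M⁻¹ ^ 2).mulVec (Real.sqrt C • u)) = C * s⁻¹ ^ 2 := by
    rw [hQ]
    have : M⁻¹.mulVec (Real.sqrt C • u) = (Real.sqrt C * s⁻¹) • u := by
      rw [Matrix.mulVec_smul, hMinv_u, smul_smul]
    rw [this]
    have : ∑ i, ((Real.sqrt C * s⁻¹) • u) i * ((Real.sqrt C * s⁻¹) • u) i
        = (Real.sqrt C * s⁻¹)^2 * ∑ i, u i ^ 2 := by
      rw [Finset.mul_sum]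
      refine Finset.sum_congr rfl fun i _ => ?_
      simp [smul_eq_mul]; ring
    rw [this, hu_unit, mul_one, mul_pow, Real.sq_sqrt hC.le]
  have hlower : C * s⁻¹ ^ 2 ≤ ∑ k, c astar k ^ 2 * ((1 - μ k)⁻¹) ^ 2 := by
    rw [← hQval]
    rw [← hcand_val]
    exact hopt _ hcand_feas
  -- upper bound and equality
  have hbound : ∀ k, ((1 - μ k)⁻¹) ^ 2 ≤ s⁻¹ ^ 2 := by
    intro k
    have h1 : s ≤ 1 - μ k := by
      have := hμle k; simp only [hs_def]; linarith
    have h2 : (1 - μ k)⁻¹ ≤ s⁻¹ := by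
      exact inv_anti₀ hs h1
    have h3 : 0 ≤ (1 - μ k)⁻¹ := inv_nonneg.mpr (by linarith)
    exact pow_le_pow_left₀ h3 h2 2
  have hterm_le : ∀ k, c astar k ^ 2 * ((1 - μ k)⁻¹) ^ 2 ≤ c astar k ^ 2 * s⁻¹ ^ 2 :=
    fun k => mul_le_mul_of_nonneg_left (hbound k) (sq_nonneg _)
  have hsumc_le : (∑ k, c astar k ^ 2) ≤ C := by rw [← hnorm]; exact hfeas
  have hupper : (∑ k, c astar k ^ 2 * ((1 - μ k)⁻¹) ^ 2) ≤ C * s⁻¹ ^ 2 := by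
    calc (∑ k, c astar k ^ 2 * ((1 - μ k)⁻¹) ^ 2)
        ≤ ∑ k, c astar k ^ 2 * s⁻¹ ^ 2 := Finset.sum_le_sum fun k _ => hterm_le k
      _ = (∑ k, c astar k ^ 2) * s⁻¹ ^ 2 := by rw [Finset.sum_mul]
      _ ≤ C * s⁻¹ ^ 2 := by
          apply mul_le_mul_of_nonneg_right hsumc_le (by positivity)
  have heq1 : (∑ k, c astar k ^ 2 * ((1 - μ k)⁻¹) ^ 2) = C * s⁻¹ ^ 2 :=
    le_antisymm hupper hlower
  have heq2 : (∑ k, c astar k ^ 2 * ((1 - μ k)⁻¹) ^ 2) = ∑ k, c astar k ^ 2 * s⁻¹ ^ 2 := by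
    apply le_antisymm (Finset.sum_le_sum fun k _ => hterm_le k)
    rw [heq1]
    calc (∑ k, c astar k ^ 2 * s⁻¹ ^ 2)
        = (∑ k, c astar k ^ 2) * s⁻¹ ^ 2 := by rw [Finset.sum_mul]
      _ ≤ C * s⁻¹ ^ 2 := mul_le_mul_of_nonneg_right hsumc_le (by positivity)
  have hsumc_eq : (∑ k, c astar k ^ 2) = C := by
    have h1 : (∑ k, c astar k ^ 2) * s⁻¹ ^ 2 = C * s⁻¹ ^ 2 := by
      rw [Finset.sum_mul, ← heq2, heq1]
    have hs2 : s⁻¹ ^ 2 ≠ 0 := by positivity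
    exact mul_right_cancel₀ hs2 h1
  have hterm_eq : ∀ k, c astar k ^ 2 * ((1 - μ k)⁻¹) ^ 2 = c astar k ^ 2 * s⁻¹ ^ 2 := by
    have := (Finset.sum_eq_sum_iff_of_le (fun k _ => hterm_le k)).mp heq2
    exact fun k => (this k (Finset.mem_univ k))
  have hck : ∀ k, c astar k = 0 ∨ μ k = lam1 := by
    intro k
    by_cases hc0 : c astar k = 0
    · exact Or.inl hc0
    · right
      have h1 : ((1 - μ k)⁻¹) ^ 2 = s⁻¹ ^ 2 :=
        mul_left_cancel₀ (pow_ne_zero 2 hc0) (hterm_eq k)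
      have h2 : 0 < 1 - μ k := by linarith [hμlt k]
      have h3 : (1 - μ k)⁻¹ = s⁻¹ := by
        have ha : 0 < (1 - μ k)⁻¹ := by positivity
        have hb : 0 < s⁻¹ := by positivity
        nlinarith [sq_nonneg ((1 - μ k)⁻¹ - s⁻¹), sq_nonneg ((1 - μ k)⁻¹ + s⁻¹)]
      have h4 : 1 - μ k = s := by
        have := congrArg (·⁻¹) h3
        simpa using this
      simp only [hs_def] at h4
      linarith
  -- astar is an eigenvector for lam1
  have hastar_eig : A.mulVec astar = lam1 • astar := by
    conv_lhs => rw [hrep astar]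
    conv_rhs => rw [hrep astar]
    rw [show A.mulVec (∑ k, c astar k • v k) = ∑ k, A.mulVec (c astar k • v k) from
      map_sum (Matrix.mulVecLin A) _ Finset.univ]
    rw [Finset.smul_sum]
    refine Finset.sum_congr rfl fun k _ => ?_
    rw [Matrix.mulVec_smul, hv_eig k, smul_smul, smul_smul]
    rcases hck k with h | h
    · rw [h]; simp
    · rw [h, mul_comm]
  obtain ⟨t, ht⟩ := hsimple astar hastar_eig
  have ht2 : t ^ 2 = C := by
    have h1 : (∑ i, astar i ^ 2) = t ^ 2 := by
      rw [ht]
      have : ∀ i, (t • u) i ^ 2 = t ^ 2 * u i ^ 2 := fun i => by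
        simp [smul_eq_mul]; ring
      simp_rw [this, ← Finset.mul_sum, hu_unit, mul_one]
    rw [← h1, hnorm, hsumc_eq]
  have ht0 : t ≠ 0 := by
    intro h
    rw [h] at ht2
    simp at ht2
    exact absurd ht2.symm (ne_of_gt hC)
  -- compute xstar and pay
  have hxstar : ∀ i, xstar i = t * s⁻¹ * u i := by
    intro i
    have : xstar = M⁻¹.mulVec astar := rfl
    rw [this, ht, Matrix.mulVec_smul, hMinv_u, smul_smul]
    rfl
  set K : ℝ := C / (2 * s ^ 2) with hK_def
  have hK : 0 < K := by positivity
  have hpay : ∀ i, pay i = K * u i ^ 2 := by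
    intro i
    show xstar i ^ 2 / 2 = K * u i ^ 2
    have hsne : s ≠ 0 := ne_of_gt hs
    rw [hxstar i, hK_def, ← ht2]
    field_simp
  have hpos : ∀ i, 0 < pay i := by
    intro i
    rw [hpay i]
    have := hu_ne i
    positivity
  refine ⟨hpos, ?_⟩
  have hsum_pay : (∑ i, pay i) = K := by
    simp_rw [hpay, ← Finset.mul_sum, hu_unit, mul_one]
  have hn' : (0:ℝ) < n := by exact_mod_cast hn
  have hpaybar : paybar = K / n := by
    show (∑ i, pay i) / n = K / n
    rw [hsum_pay]
  have hratio : ∀ i, pay i / paybar = n * u i ^ 2 := by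
    intro i
    rw [hpay i, hpaybar]
    field_simp
  simp_rw [hratio]
  rw [Finset.mul_sum]
  refine Finset.sum_congr rfl fun i _ => ?_
  field_simp
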